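/- For a topological group G, the following two properties are equivalent: (⊛₁) for all finite subsets A, B of G with every element of A commuting with every element of B, and every assignment of neighbourhoods to the points of A and B, there exist finite subsets A', B' (with corresponding points in the prescribed neighbourhoods) such that every element of A' commutes with every element of B' and the subgroup generated by A' ∪ B' is relatively compact; (⊛₃) with Γ = F∞ × F∞ (the direct product of two free groups of countably infinite rank), the homomorphisms Γ → G with relatively compact range are dense in the space Rep(Γ, G) = Hom(Γ, G) ⊆ G^Γ with the product topology. -/

import Mathlib

open scoped Pointwise

lemma freeGroup_pure_eq_of {α : Type*} (x : α) : (pure x : FreeGroup α) = FreeGroup.of x := rfl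

lemma commute_freeGroupLift {G : Type*} [Group G] {s t : ℕ → G}
    (h : ∀ m n, Commute (s m) (t n)) (x y : FreeGroup ℕ) :
    Commute (FreeGroup.lift s x) (FreeGroup.lift t y) := by
  have key : ∀ x : FreeGroup ℕ, ∀ n, Commute (FreeGroup.lift s x) (t n) := by
    intro x n
    induction x using FreeGroup.induction_on with
    | C1 => simpa using Commute.one_left _
    | of m => simpa [freeGroup_pure_eq_of] using h m n
    | inv_of m ih => simpa [freeGroup_pure_eq_of] using
        (by simpa [freeGroup_pure_eq_of] using ih : Commute (s m) (t n)).inv_left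
    | mul a b iha ihb => simpa using iha.mul_left ihb
  induction y using FreeGroup.induction_on with
  | C1 => simpa using Commute.one_right _
  | of n => simpa [freeGroup_pure_eq_of] using key x n
  | inv_of n ih => simpa [freeGroup_pure_eq_of] using (key x n).inv_right
  | mul a b iha ihb => simpa using iha.mul_right ihb

lemma continuous_freeGroupLift {G : Type*} [Group G] [TopologicalSpace G]
    [IsTopologicalGroup G] (w : FreeGroup ℕ) :
    Continuous fun u : ℕ → G => FreeGroup.lift u w := by
  induction w using FreeGroup.induction_on with
  | C1 => simpa using continuous_const
  | of n => simpa [freeGroup_pure_eq_of] using continuous_apply (A := fun _ : ℕ => G) n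
  | inv_of n ih => exact ih.inv.congr (by simp)
  | mul a b iha ihb => exact (iha.mul ihb).congr (by simp)


/-- Property ⊛₁ of a topological group: commuting finite subsets can be
approximated by commuting finite subsets generating a relatively compact
subgroup. -/
def KirchbergStar1 (G : Type*) [Group G] [TopologicalSpace G] : Prop :=
  ∀ (A B : Finset G), (∀ a ∈ A, ∀ b ∈ B, Commute a b) →
    ∀ U : G → Set G, (∀ x, U x ∈ nhds x) →
      ∃ a' b' : G → G,
        (∀ x ∈ A, a' x ∈ U x) ∧ (∀ x ∈ B, b' x ∈ U x) ∧
        (∀ x ∈ A, ∀ y ∈ B, Commute (a' x) (b' y)) ∧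
        IsCompact (closure
          (Subgroup.closure (a' '' (A : Set G) ∪ b' '' (B : Set G)) : Set G))

/-- Property ⊛₃ of a topological group: homomorphisms of `F∞ × F∞` with
relatively compact range are dense in `Rep(F∞ × F∞, G)` (pointwise
convergence topology). -/
def KirchbergStar3 (G : Type*) [Group G] [TopologicalSpace G] : Prop :=
  ∀ (f : FreeGroup ℕ × FreeGroup ℕ →* G)
    (S : Finset (FreeGroup ℕ × FreeGroup ℕ))
    (U : FreeGroup ℕ × FreeGroup ℕ → Set G),
    (∀ γ, U γ ∈ nhds (f γ)) →
      ∃ h : FreeGroup ℕ × FreeGroup ℕ →* G,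
        IsCompact (closure (Set.range h)) ∧ ∀ γ ∈ S, h γ ∈ U γ

theorem kirchbergStar1_iff_star3 (G : Type*) [Group G] [TopologicalSpace G]
    [IsTopologicalGroup G] : KirchbergStar1 G ↔ KirchbergStar3 G := by
  classical
  constructor
  · -- ⊛₁ → ⊛₃
    intro hs1 f S U hU
    set p₁ : ℕ → G := fun n => f (FreeGroup.of n, 1) with hp₁
    set p₂ : ℕ → G := fun n => f (1, FreeGroup.of n) with hp₂
    -- word evaluation maps
    have hEval : ∀ γ : FreeGroup ℕ × FreeGroup ℕ,
        FreeGroup.lift p₁ γ.1 * FreeGroup.lift p₂ γ.2 = f γ := by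
      intro γ
      have h1 : ∀ x, FreeGroup.lift p₁ x = f (x, 1) := by
        intro x
        exact (FreeGroup.lift_unique (f.comp (MonoidHom.inl _ _))
          (fun n => rfl)).symm
      have h2 : ∀ x, FreeGroup.lift p₂ x = f (1, x) := by
        intro x
        exact (FreeGroup.lift_unique (f.comp (MonoidHom.inr _ _))
          (fun n => rfl)).symm
      rw [h1, h2, ← map_mul]
      simp
    have hT : (⋂ γ ∈ S, (fun q : (ℕ → G) × (ℕ → G) =>
        FreeGroup.lift q.1 γ.1 * FreeGroup.lift q.2 γ.2) ⁻¹' U γ) ∈ nhds (p₁, p₂) := by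
      refine (Filter.biInter_finset_mem S).mpr fun γ _ => ?_
      have hc : Continuous (fun q : (ℕ → G) × (ℕ → G) =>
          FreeGroup.lift q.1 γ.1 * FreeGroup.lift q.2 γ.2) :=
        ((continuous_freeGroupLift γ.1).comp continuous_fst).mul
          ((continuous_freeGroupLift γ.2).comp continuous_snd)
      refine hc.continuousAt.preimage_mem_nhds ?_
      simpa [hEval γ] using hU γ
    rw [nhds_prod_eq, Filter.mem_prod_iff] at hT
    obtain ⟨T₁, hT₁, T₂, hT₂, hTsub⟩ := hT
    rw [nhds_pi, Filter.mem_pi'] at hT₁ hT₂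
    obtain ⟨I₁, V₁, hV₁, hV₁sub⟩ := hT₁
    obtain ⟨I₂, V₂, hV₂, hV₂sub⟩ := hT₂
    set A : Finset G := I₁.image p₁ with hA
    set B : Finset G := I₂.image p₂ with hB
    have hABcomm : ∀ a ∈ A, ∀ b ∈ B, Commute a b := by
      intro a ha b hb
      simp only [hA, hB, Finset.mem_image] at ha hb
      obtain ⟨m, -, rfl⟩ := ha
      obtain ⟨n, -, rfl⟩ := hb
      exact (MonoidHom.commute_inl_inr (FreeGroup.of m) (FreeGroup.of n)).map f
    set U' : G → Set G := fun x =>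
      (⋂ n ∈ I₁, if p₁ n = x then V₁ n else Set.univ) ∩
      (⋂ n ∈ I₂, if p₂ n = x then V₂ n else Set.univ) with hU'
    have hU'mem : ∀ x, U' x ∈ nhds x := by
      intro x
      refine Filter.inter_mem ((Filter.biInter_finset_mem I₁).mpr fun n _ => ?_)
        ((Filter.biInter_finset_mem I₂).mpr fun n _ => ?_)
      · split_ifs with hh
        · rw [← hh]; exact hV₁ n
        · exact Filter.univ_mem
      · split_ifs with hh
        · rw [← hh]; exact hV₂ n
        · exact Filter.univ_mem
    obtain ⟨a', b', ha', hb', hcomm, hcpt⟩ := hs1 A B hABcomm U' hU'mem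
    set u : ℕ → G := fun n => if n ∈ I₁ then a' (p₁ n) else 1 with hu
    set v : ℕ → G := fun n => if n ∈ I₂ then b' (p₂ n) else 1 with hv
    have huv : ∀ m n, Commute (u m) (v n) := by
      intro m n
      simp only [hu, hv]
      split_ifs with hm hn hn
      · exact hcomm _ (Finset.mem_image_of_mem _ hm) _ (Finset.mem_image_of_mem _ hn)
      · exact Commute.one_right _
      · exact Commute.one_left _
      · exact Commute.one_right _
    refine ⟨MonoidHom.noncommCoprod (FreeGroup.lift u) (FreeGroup.lift v)
      (commute_freeGroupLift huv), ?_, ?_⟩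
    · -- relatively compact range
      set K := Subgroup.closure (a' '' (A : Set G) ∪ b' '' (B : Set G)) with hK
      have hsub : Set.range (MonoidHom.noncommCoprod (FreeGroup.lift u) (FreeGroup.lift v)
          (commute_freeGroupLift huv)) ⊆ (K : Set G) := by
        rintro - ⟨γ, rfl⟩
        have h1 : FreeGroup.lift u γ.1 ∈ K := by
          have : (FreeGroup.lift u).range ≤ K := by
            rw [FreeGroup.range_lift_eq_closure]
            refine (Subgroup.closure_le _).mpr ?_
            rintro - ⟨n, rfl⟩
            simp only [hu]
            split_ifs with hn
            · exact Subgroup.subset_closure (Or.inl ⟨p₁ n, Finset.mem_coe.mpr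
                (Finset.mem_image_of_mem _ hn), rfl⟩)
            · exact K.one_mem
          exact this ⟨γ.1, rfl⟩
        have h2 : FreeGroup.lift v γ.2 ∈ K := by
          have : (FreeGroup.lift v).range ≤ K := by
            rw [FreeGroup.range_lift_eq_closure]
            refine (Subgroup.closure_le _).mpr ?_
            rintro - ⟨n, rfl⟩
            simp only [hv]
            split_ifs with hn
            · exact Subgroup.subset_closure (Or.inr ⟨p₂ n, Finset.mem_coe.mpr
                (Finset.mem_image_of_mem _ hn), rfl⟩)
            · exact K.one_mem
          exact this ⟨γ.2, rfl⟩
        exact K.mul_mem h1 h2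
      exact hcpt.of_isClosed_subset isClosed_closure (closure_mono hsub)
    · -- approximation on S
      intro γ hγ
      have hmem : (u, v) ∈ T₁ ×ˢ T₂ := by
        constructor
        · refine hV₁sub fun n hn => ?_
          have hn' : n ∈ I₁ := hn
          simp only [hu, if_pos hn']
          have := ha' (p₁ n) (Finset.mem_image_of_mem _ hn')
          rw [hU'] at this
          have := this.1
          have h3 := Set.mem_iInter₂.mp this n hn'
          simpa using h3
        · refine hV₂sub fun n hn => ?_
          have hn' : n ∈ I₂ := hn
          simp only [hv, if_pos hn']
          have := hb' (p₂ n) (Finset.mem_image_of_mem _ hn')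
          rw [hU'] at this
          have := this.2
          have h3 := Set.mem_iInter₂.mp this n hn'
          simpa using h3
      have := hTsub hmem
      have h4 := Set.mem_iInter₂.mp this γ hγ
      simpa [MonoidHom.noncommCoprod_apply] using h4
  · -- ⊛₃ → ⊛₁
    intro hs3 A B hAB U hU
    set lA := A.toList with hlA
    set lB := B.toList with hlB
    set s : ℕ → G := fun n => lA.getD n 1 with hsdef
    set t : ℕ → G := fun n => lB.getD n 1 with htdef
    have hs_mem : ∀ n, s n ∈ (A : Set G) ∪ {1} := by
      intro n
      rcases lt_or_ge n lA.length with hn | hn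
      · left
        show lA.getD n 1 ∈ _
        rw [List.getD_eq_getElem lA 1 hn]
        exact Finset.mem_coe.mpr (by rw [hlA] at *; exact Finset.mem_toList.mp (List.getElem_mem _))
      · right
        show lA.getD n 1 ∈ ({1} : Set G)
        simp [List.getD, List.getElem?_eq_none hn]
    have ht_mem : ∀ n, t n ∈ (B : Set G) ∪ {1} := by
      intro n
      rcases lt_or_ge n lB.length with hn | hn
      · left
        show lB.getD n 1 ∈ _
        rw [List.getD_eq_getElem lB 1 hn]
        exact Finset.mem_coe.mpr (by rw [hlB] at *; exact Finset.mem_toList.mp (List.getElem_mem _))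
      · right
        show lB.getD n 1 ∈ ({1} : Set G)
        simp [List.getD, List.getElem?_eq_none hn]
    have hst : ∀ m n, Commute (s m) (t n) := by
      intro m n
      rcases hs_mem m with hm | hm
      · rcases ht_mem n with hn | hn
        · exact hAB _ hm _ hn
        · rw [Set.mem_singleton_iff.mp hn]; exact Commute.one_right _
      · rw [Set.mem_singleton_iff.mp hm]; exact Commute.one_left _
    set f : FreeGroup ℕ × FreeGroup ℕ →* G :=
      MonoidHom.noncommCoprod (FreeGroup.lift s) (FreeGroup.lift t)
        (commute_freeGroupLift hst) with hf
    -- key computations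
    have hsx : ∀ x ∈ A, s (lA.idxOf x) = x := by
      intro x hx
      have hx' : x ∈ lA := by rw [hlA]; exact Finset.mem_toList.mpr hx
      have hlt : lA.idxOf x < lA.length := List.idxOf_lt_length_iff.mpr hx'
      simp only [hsdef]
      rw [List.getD_eq_getElem lA 1 hlt, List.getElem_idxOf]
    have htx : ∀ x ∈ B, t (lB.idxOf x) = x := by
      intro x hx
      have hx' : x ∈ lB := by rw [hlB]; exact Finset.mem_toList.mpr hx
      have hlt : lB.idxOf x < lB.length := List.idxOf_lt_length_iff.mpr hx'
      simp only [htdef]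
      rw [List.getD_eq_getElem lB 1 hlt, List.getElem_idxOf]
    have hfA : ∀ x ∈ A, f (FreeGroup.of (lA.idxOf x), 1) = x := by
      intro x hx
      simp [hf, MonoidHom.noncommCoprod_apply, hsx x hx]
    have hfB : ∀ x ∈ B, f (1, FreeGroup.of (lB.idxOf x)) = x := by
      intro x hx
      simp [hf, MonoidHom.noncommCoprod_apply, htx x hx]
    set S : Finset (FreeGroup ℕ × FreeGroup ℕ) :=
      A.image (fun x => (FreeGroup.of (lA.idxOf x), 1)) ∪
      B.image (fun x => (1, FreeGroup.of (lB.idxOf x))) with hS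
    set U' : FreeGroup ℕ × FreeGroup ℕ → Set G := fun γ =>
      (⋂ x ∈ A, if γ = (FreeGroup.of (lA.idxOf x), 1) then U x else Set.univ) ∩
      (⋂ x ∈ B, if γ = (1, FreeGroup.of (lB.idxOf x)) then U x else Set.univ) with hU'
    have hU'mem : ∀ γ, U' γ ∈ nhds (f γ) := by
      intro γ
      refine Filter.inter_mem ((Filter.biInter_finset_mem A).mpr fun x hx => ?_)
        ((Filter.biInter_finset_mem B).mpr fun x hx => ?_)
      · split_ifs with hh
        · rw [hh, hfA x hx]; exact hU x
        · exact Filter.univ_mem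
      · split_ifs with hh
        · rw [hh, hfB x hx]; exact hU x
        · exact Filter.univ_mem
    obtain ⟨h, hcpt, happ⟩ := hs3 f S U' hU'mem
    refine ⟨fun x => h (FreeGroup.of (lA.idxOf x), 1),
      fun x => h (1, FreeGroup.of (lB.idxOf x)), ?_, ?_, ?_, ?_⟩
    · intro x hx
      have hγS : (FreeGroup.of (lA.idxOf x), (1 : FreeGroup ℕ)) ∈ S := by
        rw [hS]
        exact Finset.mem_union_left _ (Finset.mem_image_of_mem _ hx)
      have := happ _ hγS
      rw [hU'] at this
      have h3 := Set.mem_iInter₂.mp this.1 x hx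
      simpa using h3
    · intro x hx
      have hγS : ((1 : FreeGroup ℕ), FreeGroup.of (lB.idxOf x)) ∈ S := by
        rw [hS]
        exact Finset.mem_union_right _ (Finset.mem_image_of_mem _ hx)
      have := happ _ hγS
      rw [hU'] at this
      have h3 := Set.mem_iInter₂.mp this.2 x hx
      simpa using h3
    · intro x _ y _
      exact (MonoidHom.commute_inl_inr (FreeGroup.of (lA.idxOf x))
        (FreeGroup.of (lB.idxOf y))).map h
    · have hsub : (Subgroup.closure
          ((fun x => h (FreeGroup.of (lA.idxOf x), 1)) '' (A : Set G) ∪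
           (fun x => h (1, FreeGroup.of (lB.idxOf x))) '' (B : Set G)) : Set G) ⊆
          Set.range h := by
        have : Subgroup.closure
            ((fun x => h (FreeGroup.of (lA.idxOf x), 1)) '' (A : Set G) ∪
             (fun x => h (1, FreeGroup.of (lB.idxOf x))) '' (B : Set G)) ≤ h.range := by
          refine (Subgroup.closure_le _).mpr ?_
          rintro - (⟨x, -, rfl⟩ | ⟨x, -, rfl⟩)
          · exact ⟨_, rfl⟩
          · exact ⟨_, rfl⟩
        exact fun g hg => this hg
      exact hcpt.of_isClosed_subset isClosed_closure (closure_mono hsub)
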